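/- In the linear model Y = Xβ + Zγ + ε with a single nonzero coefficient β_j/σ = A > 0 (all other coefficients zero), the means of the standardized statistics satisfy E(T_{J,j}) ≤ E(T_{J,j}^{DT}) ≤ E(T_{M,j}), i.e., joint fitting gives the smallest signal-to-noise ratio, de-correlation intermediate, and marginal fitting (the innovated transformation) the largest. -/

import Mathlib

open Matrix

noncomputable section

/-- Diagonal entries of a real positive definite matrix are positive. -/
lemma posDef_diag_pos {n : ℕ} {P : Matrix (Fin n) (Fin n) ℝ} (hP : P.PosDef) (i : Fin n) :
    0 < P i i := by
  exact hP.diag_pos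

lemma inv_sqrt_mul_mul {x : ℝ} (hx : 0 < x) :
    1 / Real.sqrt x * x * (1 / Real.sqrt x) = 1 := by
  have h := Real.mul_self_sqrt hx.le
  have h0 : Real.sqrt x ≠ 0 := (Real.sqrt_pos.mpr hx).ne'
  field_simp
  rw [sq, h]

theorem stmt_11 {N n m : ℕ}
    (X : Matrix (Fin N) (Fin n) ℝ) (Z : Matrix (Fin N) (Fin m) ℝ)
    (β : Fin n → ℝ) (σ : ℝ) (hσ : 0 < σ)
    (hZ : IsUnit (Zᵀ * Z).det)
    (H : Matrix (Fin N) (Fin N) ℝ) (hH : H = Z * (Zᵀ * Z)⁻¹ * Zᵀ)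
    (hpd : (Xᵀ * (1 - H) * X).PosDef)
    (Λ : Matrix (Fin n) (Fin n) ℝ)
    (hΛ : Λ = Matrix.diagonal fun i => 1 / Real.sqrt ((((Xᵀ * (1 - H) * X)⁻¹ : Matrix (Fin n) (Fin n) ℝ) i i)))
    (C : Matrix (Fin n) (Fin n) ℝ)
    (hC : C = Matrix.diagonal fun i => 1 / Real.sqrt (((Xᵀ * (1 - H) * X : Matrix (Fin n) (Fin n) ℝ) i i)))
    (STJ STM : Matrix (Fin n) (Fin n) ℝ)
    (hSTJ : STJ = Λ * (Xᵀ * (1 - H) * X)⁻¹ * Λ)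
    (hSTM : STM = C * (Xᵀ * (1 - H) * X) * C)
    (UJ : Matrix (Fin n) (Fin n) ℝ)
    (hUJlow : ∀ i k : Fin n, i < k → UJ i k = 0) (hUJpos : ∀ i, 0 < UJ i i)
    (hUJ : UJ * STJ * UJᵀ = 1)
    (j : Fin n) (A : ℝ) (hA : 0 < A) (hβj : β j = σ * A)
    (hβ : ∀ i, i ≠ j → β i = 0) :
    σ⁻¹ * (Λ *ᵥ β) j ≤ σ⁻¹ * ((UJ * Λ) *ᵥ β) j ∧
    σ⁻¹ * ((UJ * Λ) *ᵥ β) j ≤ σ⁻¹ * ((STM * C⁻¹) *ᵥ β) j := by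
  set M : Matrix (Fin n) (Fin n) ℝ := Xᵀ * (1 - H) * X with hMdef
  have hm : ∀ i, 0 < M i i := posDef_diag_pos hpd
  have hx : ∀ i, 0 < M⁻¹ i i := posDef_diag_pos hpd.inv
  have hMdet : IsUnit M.det := hpd.det_pos.ne'.isUnit
  have ha0 : 0 < M⁻¹ j j := hx j
  have hb0 : 0 < M j j := hm j
  have hsa : 0 < Real.sqrt (M⁻¹ j j) := Real.sqrt_pos.mpr ha0
  have hsb : 0 < Real.sqrt (M j j) := Real.sqrt_pos.mpr hb0
  -- mulVec picks out the (j,j) entry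
  have key : ∀ Q : Matrix (Fin n) (Fin n) ℝ, (Q *ᵥ β) j = Q j j * (σ * A) := by
    intro Q
    show ∑ k, Q j k * β k = _
    rw [Finset.sum_eq_single j (fun i _ hi => by rw [hβ i hi, mul_zero]) (by simp), hβj]
  -- entries
  have hΛjj : Λ j j = 1 / Real.sqrt (M⁻¹ j j) := by rw [hΛ]; simp
  have hUΛ : (UJ * Λ) j j = UJ j j * (1 / Real.sqrt (M⁻¹ j j)) := by
    rw [hΛ, Matrix.mul_diagonal]
  -- C is invertible
  have hCdet : IsUnit C.det := by
    rw [hC, Matrix.det_diagonal, isUnit_iff_ne_zero]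
    exact Finset.prod_ne_zero_iff.mpr fun i _ =>
      (one_div_pos.mpr (Real.sqrt_pos.mpr (hm i))).ne'
  have hSTMC : STM * C⁻¹ = C * M := by
    rw [hSTM, Matrix.mul_assoc (C * M) C C⁻¹, Matrix.mul_nonsing_inv _ hCdet, Matrix.mul_one]
  have hCM : (C * M) j j = Real.sqrt (M j j) := by
    rw [hC, Matrix.diagonal_mul, one_div, inv_mul_eq_div, Real.div_sqrt]
  -- triangularity of UJ and its transpose
  have hUJtri : BlockTriangular UJᵀ id := fun i k hik => hUJlow k i hik
  have hUJdet : IsUnit UJᵀ.det := by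
    rw [Matrix.det_of_upperTriangular hUJtri, isUnit_iff_ne_zero]
    exact Finset.prod_ne_zero_iff.mpr fun i _ => (hUJpos i).ne'
  haveI : Invertible UJᵀ := (UJᵀ).invertibleOfIsUnitDet hUJdet
  set W : Matrix (Fin n) (Fin n) ℝ := (UJᵀ)⁻¹ with hWdef
  have hWtri : BlockTriangular W id := blockTriangular_inv_of_blockTriangular hUJtri
  have hUW : UJᵀ * W = 1 := Matrix.mul_nonsing_inv _ hUJdet
  have hWU : W * UJᵀ = 1 := Matrix.nonsing_inv_mul _ hUJdet
  -- W j j * UJ j j = 1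
  have hWjj : UJ j j * W j j = 1 := by
    have h1 : ∑ k, UJᵀ j k * W k j = 1 := by
      have h0 := congrFun (congrFun hUW j) j
      rwa [Matrix.mul_apply, Matrix.one_apply_eq] at h0
    have h2 : ∑ k, UJᵀ j k * W k j = UJᵀ j j * W j j := by
      refine Finset.sum_eq_single j (fun k _ hk => ?_) (fun h => absurd (Finset.mem_univ j) h)
      rcases lt_or_gt_of_ne hk with h | h
      · rw [Matrix.transpose_apply, hUJlow k j h, zero_mul]
      · rw [hWtri h, mul_zero]
    rw [← h1, h2, Matrix.transpose_apply]
  have hWpos : 0 < W j j := by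
    rcases lt_trichotomy (W j j) 0 with h | h | h
    · nlinarith [hUJpos j]
    · rw [h, mul_zero] at hWjj; norm_num at hWjj
    · exact h
  -- STJ = Wᵀ * W
  have hWUJ : W = UJ * STJ := by
    rw [hWdef, Matrix.inv_eq_left_inv hUJ]
  have hUJdet' : IsUnit UJ.det := by rwa [← Matrix.det_transpose]
  have hSTJW : STJ = Wᵀ * W := by
    have hWT : Wᵀ = UJ⁻¹ := by
      rw [hWdef, ← Matrix.transpose_nonsing_inv, Matrix.transpose_transpose]
    rw [hWT, hWUJ, ← Matrix.mul_assoc, Matrix.nonsing_inv_mul _ hUJdet', Matrix.one_mul]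
  -- STJ j j = 1
  have hSTJjj : STJ j j = 1 := by
    rw [hSTJ, hΛ, Matrix.mul_diagonal, Matrix.diagonal_mul]
    exact inv_sqrt_mul_mul ha0
  -- 1 ≤ UJ j j
  have hUJge1 : 1 ≤ UJ j j := by
    have hsum : ∑ k, W k j ^ 2 = 1 := by
      rw [← hSTJjj, hSTJW, Matrix.mul_apply]
      exact Finset.sum_congr rfl fun k _ => by rw [Matrix.transpose_apply]; ring
    have hle : W j j ^ 2 ≤ 1 := by
      rw [← hsum]
      exact Finset.single_le_sum (f := fun k => W k j ^ 2)
        (fun k _ => sq_nonneg _) (Finset.mem_univ j)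
    nlinarith
  -- STJ⁻¹ = UJᵀ * UJ and = D * M * D
  set D : Matrix (Fin n) (Fin n) ℝ := Matrix.diagonal (fun i => Real.sqrt (M⁻¹ i i)) with hD
  have hΛD : Λ * D = 1 := by
    have hfun : (fun i => 1 / Real.sqrt (M⁻¹ i i) * Real.sqrt (M⁻¹ i i)) = fun _ => (1 : ℝ) :=
      funext fun i => by
        rw [one_div, inv_mul_cancel₀ (Real.sqrt_pos.mpr (hx i)).ne']
    rw [hΛ, hD, Matrix.diagonal_mul_diagonal, hfun, Matrix.diagonal_one]
  have hSTJDMD : STJ * (D * M * D) = 1 := by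
    rw [hSTJ]
    simp only [Matrix.mul_assoc]
    rw [show Λ * (D * (M * D)) = M * D from by
      rw [← Matrix.mul_assoc, hΛD, Matrix.one_mul]]
    rw [← Matrix.mul_assoc M⁻¹ M D, Matrix.nonsing_inv_mul _ hMdet, Matrix.one_mul, hΛD]
  have hSTJUU : STJ * (UJᵀ * UJ) = 1 := by
    rw [hSTJW, Matrix.mul_assoc, ← Matrix.mul_assoc W UJᵀ UJ, hWU, Matrix.one_mul,
      show Wᵀ * UJ = (UJᵀ * W)ᵀ from by rw [Matrix.transpose_mul, Matrix.transpose_transpose],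
      hUW, Matrix.transpose_one]
  have hUUDMD : UJᵀ * UJ = D * M * D := by
    rw [← Matrix.inv_eq_right_inv hSTJUU, ← Matrix.inv_eq_right_inv hSTJDMD]
  -- (UJ j j)^2 ≤ (M⁻¹ j j) * (M j j)
  have hUJsq : UJ j j ^ 2 ≤ M⁻¹ j j * M j j := by
    have h1 : (UJᵀ * UJ) j j = M⁻¹ j j * M j j := by
      rw [hUUDMD, hD, Matrix.mul_diagonal, Matrix.diagonal_mul,
        mul_comm (Real.sqrt (M⁻¹ j j)) (M j j), mul_assoc,
        Real.mul_self_sqrt ha0.le]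
      ring
    have h2 : UJ j j ^ 2 ≤ (UJᵀ * UJ) j j := by
      rw [Matrix.mul_apply]
      calc UJ j j ^ 2 = UJᵀ j j * UJ j j := by rw [Matrix.transpose_apply]; ring
        _ ≤ ∑ k, UJᵀ j k * UJ k j :=
            Finset.single_le_sum (f := fun k => UJᵀ j k * UJ k j)
              (fun k _ => by
                show (0:ℝ) ≤ UJᵀ j k * UJ k j
                rw [Matrix.transpose_apply]; exact mul_self_nonneg _)
              (Finset.mem_univ j)
    linarith
  have hUJle : UJ j j ≤ Real.sqrt (M⁻¹ j j) * Real.sqrt (M j j) := by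
    have hsq : (Real.sqrt (M⁻¹ j j) * Real.sqrt (M j j)) ^ 2 = M⁻¹ j j * M j j := by
      rw [mul_pow, Real.sq_sqrt ha0.le, Real.sq_sqrt hb0.le]
    nlinarith [hUJpos j, mul_pos hsa hsb]
  -- entrywise inequalities
  have E1 : Λ j j ≤ (UJ * Λ) j j := by
    rw [hΛjj, hUΛ]
    nlinarith [one_div_pos.mpr hsa]
  have E2 : (UJ * Λ) j j ≤ (STM * C⁻¹) j j := by
    rw [hUΛ, hSTMC, hCM, mul_one_div, div_le_iff₀ hsa]
    calc UJ j j ≤ Real.sqrt (M⁻¹ j j) * Real.sqrt (M j j) := hUJle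
      _ = Real.sqrt (M j j) * Real.sqrt (M⁻¹ j j) := mul_comm _ _
  -- assemble
  have hσA : 0 < σ * A := mul_pos hσ hA
  constructor
  · rw [key, key]
    exact mul_le_mul_of_nonneg_left (mul_le_mul_of_nonneg_right E1 hσA.le)
      (inv_nonneg.mpr hσ.le)
  · rw [key, key]
    exact mul_le_mul_of_nonneg_left (mul_le_mul_of_nonneg_right E2 hσA.le)
      (inv_nonneg.mpr hσ.le)
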